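/- arXiv:1805.02090 — 2 statements merged into one kernel-verified Lean document; each statement's English description precedes it below -/
import Mathlib

section
/- (Schur's first multiplier theorem) Let A be a Schur ring over a finite abelian group G, X a basic set of A, and m an integer coprime to |G|. Then X^(m) = {x^m : x ∈ X} is again a basic set of A. Equivalently, the automorphism g ↦ g^m of G is a Cayley isomorphism from A onto itself. -/
open scoped BigOperators

/-- The indicator element `X̲ = Σ_{x∈X} x` of a finset in the integral group ring `ℤG`. -/
noncomputable def grpInd {G : Type*} [Group G] (X : Finset G) : MonoidAlgebra ℤ G :=
  ∑ x ∈ X, MonoidAlgebra.single x (1 : ℤ)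

/-- A Schur ring over a finite group `G`: a partition of `G` containing `{1}`,
closed under inverses, whose indicator elements span a subring of `ℤG`. -/
structure SchurRing (G : Type*) [Group G] [Fintype G] [DecidableEq G] where
  parts : Finset (Finset G)
  nonempty_mem : ∀ X ∈ parts, X.Nonempty
  cover : ∀ g : G, ∃ X ∈ parts, g ∈ X
  pairwise_disjoint : ∀ X ∈ parts, ∀ Y ∈ parts, X ≠ Y → Disjoint X Y
  one_mem : ({1} : Finset G) ∈ parts
  inv_mem : ∀ X ∈ parts, X.image (·⁻¹) ∈ parts
  mul_mem : ∀ X ∈ parts, ∀ Y ∈ parts, ∃ c : Finset G → ℤ,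
    grpInd X * grpInd Y = ∑ Z ∈ parts, c Z • grpInd Z

namespace SchurRing

variable {G : Type*} [Group G] [Fintype G] [DecidableEq G]

/-- The underlying `ℤ`-module of the Schur ring: the span of the indicators of basic sets. -/
noncomputable def carrier (A : SchurRing G) : Submodule ℤ (MonoidAlgebra ℤ G) :=
  Submodule.span ℤ {v | ∃ X ∈ A.parts, v = grpInd X}

/-- `X ⊆ G` is an `A`-set if its indicator lies in `A`. -/
def IsASet (A : SchurRing G) (X : Finset G) : Prop := grpInd X ∈ A.carrier

/-- `A` is a subring of `B` (as S-rings over the same group). -/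
def le (A B : SchurRing G) : Prop := ∀ X ∈ A.parts, grpInd X ∈ B.carrier

end SchurRing

/-- An algebraic isomorphism of Schur rings: a bijection of basic sets preserving all
structure constants (the structure constant `c^Z_{X,Y}` is the coefficient of the
product `X̲·Y̲` at any `z ∈ Z`). -/
def IsAlgIso {G G' : Type*} [Group G] [Fintype G] [DecidableEq G]
    [Group G'] [Fintype G'] [DecidableEq G']
    (A : SchurRing G) (A' : SchurRing G') (φ : Finset G → Finset G') : Prop :=
  Set.BijOn φ ↑A.parts ↑A'.parts ∧
  ∀ X ∈ A.parts, ∀ Y ∈ A.parts, ∀ Z ∈ A.parts, ∀ z ∈ Z, ∀ z' ∈ φ Z,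
    (grpInd X * grpInd Y).coeff z = (grpInd (φ X) * grpInd (φ Y)).coeff z'

/-- A combinatorial isomorphism of Schur rings: a bijection `G → G'` mapping basic sets to
basic sets and inducing a Cayley graph isomorphism on each basic set. -/
def IsCombIso {G G' : Type*} [Group G] [Fintype G] [DecidableEq G]
    [Group G'] [Fintype G'] [DecidableEq G']
    (A : SchurRing G) (A' : SchurRing G') (f : G → G') : Prop :=
  Function.Bijective f ∧
  ∀ X ∈ A.parts, X.image f ∈ A'.parts ∧
    ∀ g h : G, h * g⁻¹ ∈ X ↔ f h * (f g)⁻¹ ∈ X.image f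

/-- An automorphism of a Schur ring: a permutation of `G` preserving the edge set of
`Cay(G,X)` for every basic set `X`. -/
def IsSchurAut {G : Type*} [Group G] [Fintype G] [DecidableEq G]
    (A : SchurRing G) (f : G → G) : Prop :=
  Function.Bijective f ∧ ∀ X ∈ A.parts, ∀ g h : G, h * g⁻¹ ∈ X ↔ f h * (f g)⁻¹ ∈ X

/-- Separability with respect to the class of (finite) abelian groups. -/
def SchurRing.IsSeparableAbelian {G : Type} [Group G] [Fintype G] [DecidableEq G]
    (A : SchurRing G) : Prop :=
  ∀ (G' : Type) [CommGroup G'] [Fintype G'] [DecidableEq G'],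
    ∀ (A' : SchurRing G') (φ : Finset G → Finset G'),
    IsAlgIso A A' φ →
    ∃ f : G → G', IsCombIso A A' f ∧ ∀ X ∈ A.parts, φ X = X.image f

section Helpers

variable {G : Type*} [Group G] [Fintype G] [DecidableEq G]

lemma mAdd_apply (f g : MonoidAlgebra ℤ G) (a : G) : (f + g).coeff a = f.coeff a + g.coeff a := rfl

lemma mSmul_apply (c : ℤ) (f : MonoidAlgebra ℤ G) (a : G) : (c • f).coeff a = c * f.coeff a := rfl

lemma grpInd_apply (X : Finset G) (g : G) :
    (grpInd X).coeff g = if g ∈ X then 1 else 0 := by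
  classical
  unfold grpInd
  rw [MonoidAlgebra.coeff_sum, Finset.sum_apply']
  simp [MonoidAlgebra.coeff_single, Finsupp.single_apply]

lemma mem_carrier_of_part (A : SchurRing G) {X : Finset G} (hX : X ∈ A.parts) :
    grpInd X ∈ A.carrier :=
  Submodule.subset_span ⟨X, hX, rfl⟩

lemma const_of_mem (A : SchurRing G) {v : MonoidAlgebra ℤ G} (hv : v ∈ A.carrier) :
    ∀ X ∈ A.parts, ∀ x ∈ X, ∀ y ∈ X, v.coeff x = v.coeff y := by
  refine Submodule.span_induction ?_ ?_ ?_ ?_ hv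
  · rintro _ ⟨Y, hY, rfl⟩ X hX x hx y hy
    rw [grpInd_apply, grpInd_apply]
    rcases eq_or_ne X Y with rfl | hne
    · rw [if_pos hx, if_pos hy]
    · have hd := A.pairwise_disjoint X hX Y hY hne
      rw [if_neg (fun h => (Finset.disjoint_left.mp hd) hx h),
        if_neg (fun h => (Finset.disjoint_left.mp hd) hy h)]
  · intro X hX x hx y hy; simp
  · intro u w _ _ hu hw X hX x hx y hy
    rw [mAdd_apply, mAdd_apply, hu X hX x hx y hy, hw X hX x hx y hy]
  · intro a u _ hu X hX x hx y hy
    rw [mSmul_apply, mSmul_apply, hu X hX x hx y hy]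

lemma mem_of_const (A : SchurRing G) {v : MonoidAlgebra ℤ G}
    (h : ∀ X ∈ A.parts, ∀ x ∈ X, ∀ y ∈ X, v.coeff x = v.coeff y) :
    v ∈ A.carrier := by
  classical
  set rep : Finset G → G := fun X => if hX : X.Nonempty then hX.choose else 1 with hrep
  have hrepmem : ∀ X ∈ A.parts, rep X ∈ X := by
    intro X hX
    have hne := A.nonempty_mem X hX
    simp only [hrep, dif_pos hne]
    exact hne.choose_spec
  have hv : v = ∑ X ∈ A.parts, v.coeff (rep X) • grpInd X := by
    ext g
    rw [MonoidAlgebra.coeff_sum, Finset.sum_apply']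
    obtain ⟨X0, hX0, hgX0⟩ := A.cover g
    rw [Finset.sum_eq_single X0]
    · rw [MonoidAlgebra.coeff_smul_apply, grpInd_apply, if_pos hgX0, smul_eq_mul, mul_one]
      exact h X0 hX0 g hgX0 (rep X0) (hrepmem X0 hX0)
    · intro Y hY hne
      rw [MonoidAlgebra.coeff_smul_apply, grpInd_apply]
      have hd := A.pairwise_disjoint Y hY X0 hX0 hne
      rw [if_neg (fun hgY => (Finset.disjoint_left.mp hd) hgY hgX0)]
      simp
    · intro h'; exact absurd hX0 h'
  rw [hv]
  exact Submodule.sum_mem _ fun X hX =>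
    Submodule.smul_mem _ _ (mem_carrier_of_part A hX)

lemma mul_mem_carrier (A : SchurRing G) {u v : MonoidAlgebra ℤ G}
    (hu : u ∈ A.carrier) (hv : v ∈ A.carrier) : u * v ∈ A.carrier := by
  have key : ∀ X ∈ A.parts, ∀ Y ∈ A.parts, grpInd X * grpInd Y ∈ A.carrier := by
    intro X hX Y hY
    obtain ⟨c, hc⟩ := A.mul_mem X hX Y hY
    rw [hc]
    exact Submodule.sum_mem _ fun Z hZ =>
      Submodule.smul_mem _ _ (mem_carrier_of_part A hZ)
  have step : ∀ w ∈ A.carrier, ∀ X ∈ A.parts, grpInd X * w ∈ A.carrier := by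
    intro w hw
    refine Submodule.span_induction ?_ ?_ ?_ ?_ hw
    · rintro _ ⟨Y, hY, rfl⟩ X hX; exact key X hX Y hY
    · intro X hX; rw [mul_zero]; exact Submodule.zero_mem _
    · intro a b _ _ ha hb X hX
      rw [mul_add]; exact Submodule.add_mem _ (ha X hX) (hb X hX)
    · intro a b _ hb X hX
      rw [mul_smul_comm]; exact Submodule.smul_mem _ _ (hb X hX)
  refine Submodule.span_induction ?_ ?_ ?_ ?_ hu
  · rintro _ ⟨X, hX, rfl⟩; exact step v hv X hX
  · rw [zero_mul]; exact Submodule.zero_mem _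
  · intro a b _ _ ha hb; rw [add_mul]; exact Submodule.add_mem _ ha hb
  · intro a b _ hb; rw [smul_mul_assoc]; exact Submodule.smul_mem _ _ hb

lemma one_mem_carrier (A : SchurRing G) : (1 : MonoidAlgebra ℤ G) ∈ A.carrier := by
  have : (1 : MonoidAlgebra ℤ G) = grpInd ({1} : Finset G) := by
    unfold grpInd
    rw [Finset.sum_singleton, MonoidAlgebra.one_def]
  rw [this]
  exact mem_carrier_of_part A A.one_mem

lemma pow_mem_carrier (A : SchurRing G) {v : MonoidAlgebra ℤ G}
    (hv : v ∈ A.carrier) (t : ℕ) : v ^ t ∈ A.carrier := by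
  induction t with
  | zero => simpa using one_mem_carrier A
  | succ n ih => rw [pow_succ]; exact mul_mem_carrier A ih hv

lemma part_subset (A : SchurRing G) {T : Finset G} (hT : grpInd T ∈ A.carrier)
    {Z : Finset G} (hZ : Z ∈ A.parts) {g : G} (hgZ : g ∈ Z) (hgT : g ∈ T) : Z ⊆ T := by
  intro z hz
  have h := const_of_mem A hT Z hZ z hz g hgZ
  rw [grpInd_apply, grpInd_apply, if_pos hgT] at h
  by_contra hzT
  rw [if_neg hzT] at h
  exact one_ne_zero h.symm

lemma exists_pow_inverse (k : ℕ) (hk : Nat.Coprime k (Fintype.card G)) :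
    ∃ q : ℕ, q ≠ 0 ∧ Nat.Coprime q (Fintype.card G) ∧ ∀ x : G, (x ^ k) ^ q = x := by
  set n := Fintype.card G with hn
  rcases eq_or_lt_of_le (Nat.one_le_iff_ne_zero.mpr Fintype.card_ne_zero : 1 ≤ n) with h1 | h2
  · haveI : Subsingleton G := Fintype.card_le_one_iff_subsingleton.mp (le_of_eq h1.symm)
    exact ⟨1, one_ne_zero, Nat.coprime_one_left _, fun x => Subsingleton.elim _ _⟩
  · have hk0 : k ≠ 0 := by
      rintro rfl
      rw [Nat.coprime_zero_left] at hk
      omega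
    have htpos : 0 < Nat.totient n := Nat.totient_pos.mpr (by omega)
    refine ⟨k ^ (Nat.totient n - 1), pow_ne_zero _ hk0, Nat.Coprime.pow_left _ hk, fun x => ?_⟩
    have hkq : k * k ^ (Nat.totient n - 1) = k ^ Nat.totient n := by
      rw [← pow_succ']
      congr 1
      omega
    have hmod : k ^ Nat.totient n % n = 1 := by
      have := Nat.ModEq.pow_totient hk
      have h1n : 1 % n = 1 := Nat.mod_eq_of_lt h2
      unfold Nat.ModEq at this
      omega
    rw [← pow_mul, hkq]
    obtain ⟨s, hs⟩ : ∃ s, k ^ Nat.totient n = n * s + 1 := by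
      refine ⟨k ^ Nat.totient n / n, ?_⟩
      have := Nat.div_add_mod (k ^ Nat.totient n) n
      omega
    rw [hs, pow_add, pow_mul, pow_card_eq_one, one_pow, pow_one, one_mul]

end Helpers

section CommHelpers

variable {G : Type*} [CommGroup G] [Fintype G] [DecidableEq G]

lemma prime_step (A : SchurRing G) (p : ℕ) (hp : p.Prime) (hpn : ¬ p ∣ Fintype.card G)
    {T : Finset G} (hT : grpInd T ∈ A.carrier) :
    grpInd (T.image (· ^ p)) ∈ A.carrier := by
  classical
  haveI : Fact p.Prime := ⟨hp⟩
  obtain ⟨q, hq0, hqcop, hq⟩ :=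
    exists_pow_inverse p ((Nat.Prime.coprime_iff_not_dvd hp).mpr hpn)
  have hinj : Function.Injective (fun x : G => x ^ p) := by
    intro a b hab
    have hab' : a ^ p = b ^ p := hab
    rw [← hq a, ← hq b, hab']
  -- the characteristic-p coefficient ring
  haveI hcharP : CharP (MonoidAlgebra (ZMod p) G) p := by
    constructor
    intro n
    rw [MonoidAlgebra.natCast_def, MonoidAlgebra.single_eq_zero,
      ZMod.natCast_eq_zero_iff]
  set F : MonoidAlgebra ℤ G →+* MonoidAlgebra (ZMod p) G :=
    MonoidAlgebra.liftNCRingHom (Int.castRingHom (MonoidAlgebra (ZMod p) G))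
      (MonoidAlgebra.of (ZMod p) G) (fun _ _ => Commute.all _ _) with hF
  have hFsingle : ∀ (a : G) (b : ℤ),
      F (MonoidAlgebra.single a b) = MonoidAlgebra.single a ((b : ZMod p)) := by
    intro a b
    rw [hF]
    show MonoidAlgebra.liftNC _ _ _ = _
    rw [MonoidAlgebra.liftNC_single]
    show ((b : ℤ) : MonoidAlgebra (ZMod p) G) * MonoidAlgebra.single a 1 = _
    rw [MonoidAlgebra.intCast_def, MonoidAlgebra.single_mul_single, one_mul, mul_one]
  have hFapply : ∀ (w : MonoidAlgebra ℤ G) (g : G), (F w).coeff g = ((w.coeff g : ℤ) : ZMod p) := by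
    intro w
    induction w using MonoidAlgebra.induction_linear with
    | zero => intro g; simp
    | add f g hf hg =>
      intro a
      rw [map_add, MonoidAlgebra.coeff_add, MonoidAlgebra.coeff_add, Finsupp.add_apply, Finsupp.add_apply, hf a, hg a, Int.cast_add]
    | single a b =>
      intro g
      rw [hFsingle]
      rw [MonoidAlgebra.coeff_single, MonoidAlgebra.coeff_single, Finsupp.single_apply, Finsupp.single_apply]
      split <;> simp
  have hFgrp : ∀ S : Finset G, F (grpInd S) = ∑ x ∈ S, MonoidAlgebra.single x (1 : ZMod p) := by
    intro S
    unfold grpInd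
    rw [map_sum]
    refine Finset.sum_congr rfl fun x _ => ?_
    rw [hFsingle]; norm_num
  have hfrob : F (grpInd T ^ p) = F (grpInd (T.image (· ^ p))) := by
    rw [map_pow, hFgrp, hFgrp, sum_pow_char]
    rw [Finset.sum_image (fun a _ b _ h => hinj h)]
    refine Finset.sum_congr rfl fun x _ => ?_
    rw [MonoidAlgebra.single_pow, one_pow]
  have hdvd : ∀ g : G, (p : ℤ) ∣ ((grpInd T ^ p).coeff g - (grpInd (T.image (· ^ p))).coeff g) := by
    intro g
    have := congrArg (fun w => w.coeff g) hfrob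
    simp only [hFapply] at this
    rw [← sub_eq_zero, ← Int.cast_sub] at this
    exact (ZMod.intCast_zmod_eq_zero_iff_dvd _ _).mp this
  apply mem_of_const
  intro X hX x hx y hy
  have hpow : grpInd T ^ p ∈ A.carrier := pow_mem_carrier A hT p
  have hconst := const_of_mem A hpow X hX x hx y hy
  have h1 := hdvd x
  have h2 := hdvd y
  have h3 : (p : ℤ) ∣ ((grpInd (T.image (· ^ p))).coeff y - (grpInd (T.image (· ^ p))).coeff x) := by
    have := dvd_sub h1 h2
    rw [hconst] at this
    simpa using this
  have hple : (2 : ℤ) ≤ (p : ℤ) := by exact_mod_cast hp.two_le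
  rw [grpInd_apply, grpInd_apply]
  rw [grpInd_apply, grpInd_apply] at h3
  split_ifs with hxm hym hym
  · rfl
  · exfalso
    rw [if_pos hxm, if_neg hym] at h3
    norm_num at h3
    have := Int.le_of_dvd one_pos h3
    omega
  · exfalso
    rw [if_neg hxm, if_pos hym] at h3
    norm_num at h3
    have := Int.le_of_dvd one_pos h3
    omega
  · rfl

lemma comp_step (A : SchurRing G) :
    ∀ k : ℕ, k ≠ 0 → Nat.Coprime k (Fintype.card G) →
      ∀ T : Finset G, grpInd T ∈ A.carrier → grpInd (T.image (· ^ k)) ∈ A.carrier := by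
  intro k
  induction k using Nat.strong_induction_on with
  | _ k IH =>
    intro hk0 hkcop T hT
    rcases eq_or_ne k 1 with rfl | hk1
    · have : T.image (· ^ 1) = T := by
        ext a; simp
      rwa [this]
    · set p := k.minFac with hpdef
      have hp : p.Prime := Nat.minFac_prime hk1
      obtain ⟨t, ht⟩ := Nat.minFac_dvd k
      have ht0 : t ≠ 0 := by rintro rfl; omega
      have htlt : t < k := by
        have := hp.two_le
        nlinarith [Nat.pos_of_ne_zero ht0]
      have htdvd : t ∣ k := ⟨p, by rw [ht, Nat.mul_comm]⟩
      have htcop : Nat.Coprime t (Fintype.card G) := Nat.Coprime.coprime_dvd_left htdvd hkcop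
      have hpn : ¬ p ∣ Fintype.card G :=
        (Nat.Prime.coprime_iff_not_dvd hp).mp
          (Nat.Coprime.coprime_dvd_left (Nat.minFac_dvd k) hkcop)
      have h1 := IH t htlt ht0 htcop T hT
      have h2 := prime_step A p hp hpn h1
      have himg : (T.image (· ^ t)).image (· ^ p) = T.image (· ^ k) := by
        rw [Finset.image_image]
        refine Finset.image_congr fun x _ => ?_
        show (x ^ t) ^ p = x ^ k
        rw [← pow_mul, mul_comm t p]
        exact congrArg (x ^ ·) ht.symm
      rwa [himg] at h2

end CommHelpers

/-- Schur's first multiplier theorem: for `m` coprime to `|G|`,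
`X^(m)` is again a basic set, i.e. `g ↦ g^m` is a Cayley isomorphism of `A`. -/
theorem stmt3 {G : Type*} [CommGroup G] [Fintype G] [DecidableEq G] (A : SchurRing G)
    (X : Finset G) (hX : X ∈ A.parts) (m : ℤ) (hm : Int.gcd m (Fintype.card G) = 1) :
    X.image (fun x => x ^ m) ∈ A.parts := by
  classical
  set n := Fintype.card G with hn
  have hn0 : 0 < n := Fintype.card_pos
  rcases eq_or_lt_of_le (Nat.one_le_iff_ne_zero.mpr hn0.ne' : 1 ≤ n) with h1 | h2
  · haveI : Subsingleton G := Fintype.card_le_one_iff_subsingleton.mp (le_of_eq h1.symm)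
    have himg : X.image (fun x => x ^ m) = X := by
      rw [Finset.image_congr (g := id) (fun x _ => Subsingleton.elim _ _), Finset.image_id]
    rwa [himg]
  · -- reduce the integer exponent m to a natural number k coprime to n
    set k : ℕ := (m % (n : ℤ)).toNat with hk
    have hmodnn : 0 ≤ m % (n : ℤ) := Int.emod_nonneg m (by exact_mod_cast hn0.ne')
    have hkcast : (k : ℤ) = m % (n : ℤ) := Int.toNat_of_nonneg hmodnn
    have hpowk : ∀ x : G, x ^ m = x ^ k := by
      intro x
      have hxn : x ^ (n : ℤ) = 1 := by
        rw [zpow_natCast, hn, pow_card_eq_one]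
      calc x ^ m = x ^ ((n : ℤ) * (m / (n : ℤ)) + m % (n : ℤ)) := by
            rw [Int.mul_ediv_add_emod]
        _ = (x ^ (n : ℤ)) ^ (m / (n : ℤ)) * x ^ (m % (n : ℤ)) := by
            rw [zpow_add, zpow_mul]
        _ = x ^ (m % (n : ℤ)) := by rw [hxn, one_zpow, one_mul]
        _ = x ^ k := by rw [← hkcast, zpow_natCast]
    have hkcop : Nat.Coprime k n := by
      have hd1 : (Nat.gcd k n : ℤ) ∣ (k : ℤ) := Int.natCast_dvd_natCast.mpr (Nat.gcd_dvd_left _ _)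
      have hd2 : (Nat.gcd k n : ℤ) ∣ (n : ℤ) := Int.natCast_dvd_natCast.mpr (Nat.gcd_dvd_right _ _)
      have hdm : (Nat.gcd k n : ℤ) ∣ m := by
        have : m = (n : ℤ) * (m / (n : ℤ)) + (k : ℤ) := by rw [hkcast, Int.mul_ediv_add_emod]
        rw [this]
        exact dvd_add (Dvd.dvd.mul_right hd2 _) hd1
      have hgg := Int.dvd_gcd hdm hd2
      rw [hm] at hgg
      have : Nat.gcd k n ∣ 1 := by exact_mod_cast hgg
      exact Nat.dvd_one.mp this
    have hk0 : k ≠ 0 := by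
      rintro h0
      rw [h0, Nat.coprime_zero_left] at hkcop
      omega
    -- main argument
    obtain ⟨q, hq0, hqcop, hq⟩ := exists_pow_inverse k hkcop
    have h1 : grpInd (X.image (· ^ k)) ∈ A.carrier :=
      comp_step A k hk0 hkcop X (mem_carrier_of_part A hX)
    obtain ⟨g, hg⟩ := (A.nonempty_mem X hX).image (· ^ k)
    obtain ⟨Z, hZ, hgZ⟩ := A.cover g
    have hZsub : Z ⊆ X.image (· ^ k) := part_subset A h1 hZ hgZ hg
    have h2 : grpInd (Z.image (· ^ q)) ∈ A.carrier :=
      comp_step A q hq0 hqcop Z (mem_carrier_of_part A hZ)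
    have hXkq : (X.image (· ^ k)).image (· ^ q) = X := by
      rw [Finset.image_image]
      have : ((· ^ q) ∘ (· ^ k) : G → G) = id := funext fun x => hq x
      rw [this, Finset.image_id]
    have hZq : Z.image (· ^ q) ⊆ X := by
      rw [← hXkq]
      exact Finset.image_subset_image hZsub
    obtain ⟨h0, hh0⟩ := (A.nonempty_mem Z hZ).image (· ^ q)
    have hXsub : X ⊆ Z.image (· ^ q) :=
      part_subset A h2 hX (hZq hh0) hh0
    have hEq : Z.image (· ^ q) = X := le_antisymm hZq hXsub
    have hfin : X.image (· ^ k) = Z := by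
      rw [← hEq, Finset.image_image]
      have hqk : ∀ x : G, (x ^ q) ^ k = x := fun x => by
        rw [← pow_mul, mul_comm, pow_mul, hq]
      have : ((· ^ k) ∘ (· ^ q) : G → G) = id := funext fun x => hqk x
      rw [this, Finset.image_id]
    have : X.image (fun x => x ^ m) = X.image (· ^ k) :=
      Finset.image_congr fun x _ => hpowk x
    rw [this, hfin]
    exact hZ
end

section
/- Let p ≥ 3 be prime, G = E × P with E = C₂ × C₂ = ⟨a⟩ × ⟨b⟩ and P = ⟨z⟩ cyclic of order p. Let σ₂ ∈ Aut(E) be the involution swapping a and b, K ≤ Aut(P) of even order with index-2 subgroup M and generator θ, and ψ: ⟨σ₂⟩ → K/M the isomorphism σ₂ ↦ Mθ. Similarly let G' = E' × P with E' = ⟨c⟩ cyclic of order 4, σ₃ ∈ Aut(E') the inversion automorphism, and ψ': ⟨σ₃⟩ → K/M with σ₃ ↦ Mθ. Then the cyclotomic S-rings Cyc(A(⟨σ₂⟩,K,ψ), G) and Cyc(A(⟨σ₃⟩,K,ψ'), G') are not algebraically isomorphic. -/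
open scoped BigOperators

section Aux


lemma grpInd_mul_apply {G : Type*} [Group G] [DecidableEq G] (X Y : Finset G) (z : G) :
    (grpInd X * grpInd Y).coeff z = (((X ×ˢ Y).filter fun q => q.1 * q.2 = z).card : ℤ) := by
  rw [grpInd, grpInd, Finset.sum_mul_sum]
  simp only [MonoidAlgebra.single_mul_single, one_mul]
  rw [MonoidAlgebra.coeff_sum, Finset.sum_apply']
  rw [Finset.card_filter, Finset.sum_product]
  push_cast
  refine Finset.sum_congr rfl fun x hx => ?_
  rw [MonoidAlgebra.coeff_sum, Finset.sum_apply']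
  refine Finset.sum_congr rfl fun y hy => ?_
  rw [MonoidAlgebra.coeff_single, Finsupp.single_apply]

lemma even_offdiag {G : Type*} [DecidableEq G] (s : Finset (G × G))
    (hswap : ∀ q ∈ s, Prod.swap q ∈ s) (hne : ∀ q ∈ s, q.1 ≠ q.2) : Even s.card := by
  have h0 : (∑ _q ∈ s, (1 : ZMod 2)) = 0 := by
    refine Finset.sum_involution (fun q _ => Prod.swap q) (fun a ha => ?_) (fun a ha h => ?_)
      (fun a ha => hswap a ha) (fun a ha => Prod.swap_swap a)
    · decide
    · intro hq
      exact hne a ha (by simpa [Prod.ext_iff, eq_comm] using congrArg Prod.fst hq)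
  rw [Finset.sum_const, nsmul_eq_mul, mul_one] at h0
  obtain ⟨k, hk⟩ := (ZMod.natCast_eq_zero_iff s.card 2).mp h0
  exact ⟨k, by omega⟩

lemma odd_card_pairs {G : Type*} [CommGroup G] [DecidableEq G] (X : Finset G) (z : G) :
    Odd (((X ×ˢ X).filter fun q => q.1 * q.2 = z).card) ↔
      Odd ((X.filter fun x => x * x = z).card) := by
  classical
  set T := (X ×ˢ X).filter fun q => q.1 * q.2 = z with hT
  have hsplit : (T.filter fun q => q.1 = q.2).card + (T.filter fun q => ¬ q.1 = q.2).card
      = T.card := Finset.card_filter_add_card_filter_not _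
  have hdiag : (T.filter fun q => q.1 = q.2).card = (X.filter fun x => x * x = z).card := by
    refine Finset.card_bij (fun q _ => q.1) ?_ ?_ ?_
    · intro q hq
      rw [Finset.mem_filter] at hq
      obtain ⟨hqT, h4⟩ := hq
      rw [hT, Finset.mem_filter, Finset.mem_product] at hqT
      rw [Finset.mem_filter]
      have h3 := hqT.2
      rw [← h4] at h3
      exact ⟨hqT.1.1, h3⟩
    · intro q hq q' hq' h
      rw [Finset.mem_filter] at hq hq'
      exact Prod.ext h (by rw [← hq.2, ← hq'.2]; exact h)
    · intro x hx
      rw [Finset.mem_filter] at hx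
      refine ⟨(x, x), ?_, rfl⟩
      simp [hT, hx.1, hx.2]
  have heven : Even ((T.filter fun q => ¬ q.1 = q.2).card) := by
    refine even_offdiag _ ?_ ?_
    · intro q hq
      simp only [hT, Finset.mem_filter, Finset.mem_product] at hq ⊢
      refine ⟨⟨⟨hq.1.1.2, hq.1.1.1⟩, ?_⟩, ?_⟩
      · rw [mul_comm]; exact hq.1.2
      · simp only [Prod.fst_swap, Prod.snd_swap]; exact fun h => hq.2 h.symm
    · intro q hq
      exact (Finset.mem_filter.mp hq).2
  rw [← hsplit, Nat.odd_add, ← hdiag]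
  exact ⟨fun h => h.mpr heven, fun hD => iff_of_true hD heven⟩



section autHelpers
variable {α : Type*} [Group α]

lemma zpow_parity (a : α) (i : ℤ) : a ^ i = (a ^ (2:ℤ)) ^ (i / 2) * a ^ (i % 2) := by
  rw [← zpow_mul, ← zpow_add]; congr 1; omega

lemma mulaut_pow_fix (σ : MulAut α) {x : α} (h : σ x = x) : ∀ n : ℕ, (σ ^ n) x = x := by
  intro n
  induction n with
  | zero => simp
  | succ n ih => rw [pow_succ]; simpa [MulAut.mul_apply, h] using ih

lemma mulaut_zpow_fix (σ : MulAut α) {x : α} (h : σ x = x) (i : ℤ) : (σ ^ i) x = x := by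
  rcases Int.eq_nat_or_neg i with ⟨n, rfl | rfl⟩
  · rw [zpow_natCast]; exact mulaut_pow_fix σ h n
  · rw [zpow_neg, zpow_natCast]
    have h1 : (σ ^ n) x = x := mulaut_pow_fix σ h n
    nth_rewrite 1 [← h1]
    simp

lemma mulaut_zpow_even (σ : MulAut α) {x : α} (h : σ (σ x) = x) {i : ℤ} (hi : Even i) :
    (σ ^ i) x = x := by
  rw [zpow_parity, MulAut.mul_apply, Int.even_iff.mp hi, zpow_zero, MulAut.one_apply]
  exact mulaut_zpow_fix _ (by rw [zpow_two, MulAut.mul_apply, h]) _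

lemma mulaut_zpow_odd (σ : MulAut α) {x y : α} (h : σ (σ x) = x) (hxy : σ x = y) {i : ℤ}
    (hi : ¬ Even i) : (σ ^ i) x = y := by
  rw [zpow_parity, MulAut.mul_apply, Int.not_even_iff.mp hi, zpow_one, hxy]
  have hy : σ (σ y) = y := by rw [← hxy]; exact congrArg σ h
  exact mulaut_zpow_fix _ (by rw [zpow_two, MulAut.mul_apply, hy]) _

end autHelpers

section indexHelpers
variable {α : Type*} [Group α] {K M : Subgroup α}

lemma theta_sq_mem (hind : M.relIndex K = 2) {θ : α} (hθK : θ ∈ K) : θ * θ ∈ M := by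
  have h := Subgroup.mul_self_mem_of_index_two (H := M.subgroupOf K) hind (⟨θ, hθK⟩ : K)
  rwa [Subgroup.mem_subgroupOf] at h

lemma theta_not_mem (hind : M.relIndex K = 2)
    {θ : α} (hθgen : ∀ κ ∈ K, ∃ i : ℤ, κ = θ ^ i) (hθM : θ ∈ M) : False := by
  have hKM : K ≤ M := by
    intro κ hκ
    obtain ⟨i, rfl⟩ := hθgen κ hκ
    exact Subgroup.zpow_mem M hθM i
  rw [Subgroup.relIndex_eq_one.mpr hKM] at hind
  omega

lemma zpow_mem_even {θ : α} (hsq : θ * θ ∈ M) (hθM : θ ∉ M) {i : ℤ} (hmem : θ ^ i ∈ M) :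
    Even i := by
  by_contra hodd
  rw [zpow_parity, Int.not_even_iff.mp hodd, zpow_one, zpow_two] at hmem
  have h1 : (θ * θ) ^ (i / 2) ∈ M := Subgroup.zpow_mem M hsq _
  exact hθM (by simpa [mul_assoc] using M.mul_mem (M.inv_mem h1) hmem)

end indexHelpers

lemma aut_fix_one (p : ℕ) [Fact p.Prime] (κ : MulAut (Multiplicative (ZMod p)))
    (h : κ (Multiplicative.ofAdd (1 : ZMod p)) = Multiplicative.ofAdd (1 : ZMod p)) :
    ∀ x, κ x = x := by
  haveI : NeZero p := ⟨(Fact.out : p.Prime).ne_zero⟩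
  intro x
  have hx : x = (Multiplicative.ofAdd (1 : ZMod p)) ^ ((Multiplicative.toAdd x).val) := by
    rw [← ofAdd_nsmul, nsmul_eq_mul, mul_one, ZMod.natCast_zmod_val]
    exact (ofAdd_toAdd x).symm
  rw [hx, map_pow, h]

lemma snd_sq {p : ℕ} [Fact p.Prime] (hp3 : 3 ≤ p) {u : Multiplicative (ZMod p)}
    (h : u * u = Multiplicative.ofAdd (2 : ZMod p)) :
    u = Multiplicative.ofAdd (1 : ZMod p) := by
  have h2 : (2 : ZMod p) ≠ 0 := by
    intro h0
    have : ((2 : ℕ) : ZMod p) = 0 := by exact_mod_cast h0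
    have := Nat.le_of_dvd (by norm_num) ((ZMod.natCast_eq_zero_iff 2 p).mp this)
    omega
  have ht : Multiplicative.toAdd u + Multiplicative.toAdd u = (2 : ZMod p) := by
    have := congrArg Multiplicative.toAdd h
    simpa using this
  have h3 : (2 : ZMod p) * Multiplicative.toAdd u = 2 * 1 := by
    rw [← two_mul] at ht; rw [ht, mul_one]
  have := congrArg Multiplicative.ofAdd (mul_left_cancel₀ h2 h3)
  simpa using this

noncomputable section

def orbA (p : ℕ) [Fact p.Prime] (σ₂ : MulAut (Multiplicative (ZMod 2 × ZMod 2)))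
    (K M : Subgroup (MulAut (Multiplicative (ZMod p)))) (θ : MulAut (Multiplicative (ZMod p)))
    (g : Multiplicative (ZMod 2 × ZMod 2) × Multiplicative (ZMod p)) :
    Finset (Multiplicative (ZMod 2 × ZMod 2) × Multiplicative (ZMod p)) :=
  (Set.toFinite
    {w : Multiplicative (ZMod 2 × ZMod 2) × Multiplicative (ZMod p) |
      ∃ sk : MulAut (Multiplicative (ZMod 2 × ZMod 2)) × MulAut (Multiplicative (ZMod p)),
        (∃ i : ℤ, sk.1 = σ₂ ^ i ∧ sk.2 ∈ K ∧ sk.2 * (θ ^ i)⁻¹ ∈ M) ∧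
        w = (sk.1 g.1, sk.2 g.2)}).toFinset

variable {p : ℕ} [Fact p.Prime] {σ₂ : MulAut (Multiplicative (ZMod 2 × ZMod 2))}
    {K M : Subgroup (MulAut (Multiplicative (ZMod p)))} {θ : MulAut (Multiplicative (ZMod p))}

lemma mem_orbA {g x : Multiplicative (ZMod 2 × ZMod 2) × Multiplicative (ZMod p)} :
    x ∈ orbA p σ₂ K M θ g ↔
      ∃ sk : MulAut (Multiplicative (ZMod 2 × ZMod 2)) × MulAut (Multiplicative (ZMod p)),
        (∃ i : ℤ, sk.1 = σ₂ ^ i ∧ sk.2 ∈ K ∧ sk.2 * (θ ^ i)⁻¹ ∈ M) ∧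
        x = (sk.1 g.1, sk.2 g.2) := by
  rw [orbA, Set.Finite.mem_toFinset]
  rfl

lemma self_mem_orbA {g : Multiplicative (ZMod 2 × ZMod 2) × Multiplicative (ZMod p)} :
    g ∈ orbA p σ₂ K M θ g := by
  rw [mem_orbA]
  refine ⟨(1, 1), ⟨0, ?_, K.one_mem, ?_⟩, ?_⟩
  · rw [zpow_zero]
  · simp [M.one_mem]
  · simp

lemma filter_X1 (hp3 : 3 ≤ p) :
    (orbA p σ₂ K M θ (1, Multiplicative.ofAdd (1 : ZMod p))).filter
      (fun x => x * x =
        ((1 : Multiplicative (ZMod 2 × ZMod 2)), Multiplicative.ofAdd (2 : ZMod p)))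
      = {((1 : Multiplicative (ZMod 2 × ZMod 2)), Multiplicative.ofAdd (1 : ZMod p))} := by
  rw [Finset.eq_singleton_iff_unique_mem]
  constructor
  · rw [Finset.mem_filter]
    refine ⟨self_mem_orbA, Prod.ext (by simp) ?_⟩
    show Multiplicative.ofAdd (1 : ZMod p) * Multiplicative.ofAdd (1 : ZMod p)
        = Multiplicative.ofAdd (2 : ZMod p)
    rw [← ofAdd_add]
    norm_num
  · intro x hx
    rw [Finset.mem_filter, mem_orbA] at hx
    obtain ⟨⟨sk, ⟨i, hi, hK, hM⟩, rfl⟩, hsq⟩ := hx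
    have h2 : sk.2 (Multiplicative.ofAdd (1 : ZMod p)) = Multiplicative.ofAdd (1 : ZMod p) := by
      have := congrArg Prod.snd hsq
      exact snd_sq hp3 (by simpa using this)
    exact Prod.ext (by simpa using map_one sk.1) (by simpa using h2)

lemma filter_X2 (hp3 : 3 ≤ p)
    (hab : σ₂ (Multiplicative.ofAdd ((1, 1) : ZMod 2 × ZMod 2))
      = Multiplicative.ofAdd ((1, 1) : ZMod 2 × ZMod 2)) :
    (orbA p σ₂ K M θ
        (Multiplicative.ofAdd ((1, 1) : ZMod 2 × ZMod 2), Multiplicative.ofAdd (1 : ZMod p))).filter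
      (fun x => x * x =
        ((1 : Multiplicative (ZMod 2 × ZMod 2)), Multiplicative.ofAdd (2 : ZMod p)))
      = {(Multiplicative.ofAdd ((1, 1) : ZMod 2 × ZMod 2), Multiplicative.ofAdd (1 : ZMod p))} := by
  rw [Finset.eq_singleton_iff_unique_mem]
  constructor
  · rw [Finset.mem_filter]
    refine ⟨self_mem_orbA, Prod.ext ?_ ?_⟩
    · show Multiplicative.ofAdd ((1, 1) : ZMod 2 × ZMod 2)
          * Multiplicative.ofAdd ((1, 1) : ZMod 2 × ZMod 2) = 1
      decide
    · show Multiplicative.ofAdd (1 : ZMod p) * Multiplicative.ofAdd (1 : ZMod p)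
          = Multiplicative.ofAdd (2 : ZMod p)
      rw [← ofAdd_add]; norm_num
  · intro x hx
    rw [Finset.mem_filter, mem_orbA] at hx
    obtain ⟨⟨sk, ⟨i, hi, hK, hM⟩, rfl⟩, hsq⟩ := hx
    have h1 : sk.1 (Multiplicative.ofAdd ((1, 1) : ZMod 2 × ZMod 2))
        = Multiplicative.ofAdd ((1, 1) : ZMod 2 × ZMod 2) := by
      rw [hi]; exact mulaut_zpow_fix σ₂ hab i
    have h2 : sk.2 (Multiplicative.ofAdd (1 : ZMod p)) = Multiplicative.ofAdd (1 : ZMod p) := by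
      have := congrArg Prod.snd hsq
      exact snd_sq hp3 (by simpa using this)
    exact Prod.ext (by simpa using h1) (by simpa using h2)

lemma filter_X3 (hp3 : 3 ≤ p)
    (haa : σ₂ (σ₂ (Multiplicative.ofAdd ((1, 0) : ZMod 2 × ZMod 2)))
      = Multiplicative.ofAdd ((1, 0) : ZMod 2 × ZMod 2))
    (hsq : θ * θ ∈ M) (hθM : θ ∉ M) :
    (orbA p σ₂ K M θ
        (Multiplicative.ofAdd ((1, 0) : ZMod 2 × ZMod 2), Multiplicative.ofAdd (1 : ZMod p))).filter
      (fun x => x * x =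
        ((1 : Multiplicative (ZMod 2 × ZMod 2)), Multiplicative.ofAdd (2 : ZMod p)))
      = {(Multiplicative.ofAdd ((1, 0) : ZMod 2 × ZMod 2), Multiplicative.ofAdd (1 : ZMod p))} := by
  rw [Finset.eq_singleton_iff_unique_mem]
  constructor
  · rw [Finset.mem_filter]
    refine ⟨self_mem_orbA, Prod.ext ?_ ?_⟩
    · show Multiplicative.ofAdd ((1, 0) : ZMod 2 × ZMod 2)
          * Multiplicative.ofAdd ((1, 0) : ZMod 2 × ZMod 2) = 1
      decide
    · show Multiplicative.ofAdd (1 : ZMod p) * Multiplicative.ofAdd (1 : ZMod p)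
          = Multiplicative.ofAdd (2 : ZMod p)
      rw [← ofAdd_add]; norm_num
  · intro x hx
    rw [Finset.mem_filter, mem_orbA] at hx
    obtain ⟨⟨sk, ⟨i, hi, hK, hM⟩, rfl⟩, hsq'⟩ := hx
    have h2 : sk.2 (Multiplicative.ofAdd (1 : ZMod p)) = Multiplicative.ofAdd (1 : ZMod p) := by
      have := congrArg Prod.snd hsq'
      exact snd_sq hp3 (by simpa using this)
    have hone : sk.2 = 1 := by
      ext x
      exact aut_fix_one p sk.2 h2 x
    rw [hone, one_mul] at hM
    have heven : Even i := zpow_mem_even hsq hθM ((Subgroup.inv_mem_iff M).mp hM)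
    have h1 : sk.1 (Multiplicative.ofAdd ((1, 0) : ZMod 2 × ZMod 2))
        = Multiplicative.ofAdd ((1, 0) : ZMod 2 × ZMod 2) := by
      rw [hi]; exact mulaut_zpow_even σ₂ haa heven
    exact Prod.ext (by simpa using h1) (by simpa using h2)

lemma fst_X2
    (hab : σ₂ (Multiplicative.ofAdd ((1, 1) : ZMod 2 × ZMod 2))
      = Multiplicative.ofAdd ((1, 1) : ZMod 2 × ZMod 2))
    {x : Multiplicative (ZMod 2 × ZMod 2) × Multiplicative (ZMod p)}
    (hx : x ∈ orbA p σ₂ K M θ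
      (Multiplicative.ofAdd ((1, 1) : ZMod 2 × ZMod 2), Multiplicative.ofAdd (1 : ZMod p))) :
    x.1 = Multiplicative.ofAdd ((1, 1) : ZMod 2 × ZMod 2) := by
  rw [mem_orbA] at hx
  obtain ⟨sk, ⟨i, hi, hK, hM⟩, rfl⟩ := hx
  show sk.1 _ = _
  rw [hi]
  exact mulaut_zpow_fix σ₂ hab i

lemma fst_X3
    (haa : σ₂ (σ₂ (Multiplicative.ofAdd ((1, 0) : ZMod 2 × ZMod 2)))
      = Multiplicative.ofAdd ((1, 0) : ZMod 2 × ZMod 2))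
    (hab' : σ₂ (Multiplicative.ofAdd ((1, 0) : ZMod 2 × ZMod 2))
      = Multiplicative.ofAdd ((0, 1) : ZMod 2 × ZMod 2))
    {x : Multiplicative (ZMod 2 × ZMod 2) × Multiplicative (ZMod p)}
    (hx : x ∈ orbA p σ₂ K M θ
      (Multiplicative.ofAdd ((1, 0) : ZMod 2 × ZMod 2), Multiplicative.ofAdd (1 : ZMod p))) :
    x.1 = Multiplicative.ofAdd ((1, 0) : ZMod 2 × ZMod 2) ∨
      x.1 = Multiplicative.ofAdd ((0, 1) : ZMod 2 × ZMod 2) := by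
  rw [mem_orbA] at hx
  obtain ⟨sk, ⟨i, hi, hK, hM⟩, rfl⟩ := hx
  show sk.1 _ = _ ∨ sk.1 _ = _
  rw [hi]
  by_cases hev : Even i
  · exact Or.inl (mulaut_zpow_even σ₂ haa hev)
  · exact Or.inr (mulaut_zpow_odd σ₂ haa hab' hev)

lemma two_nz (hp3 : 3 ≤ p) : (2 : ZMod p) ≠ 0 := by
  intro h0
  have : ((2 : ℕ) : ZMod p) = 0 := by exact_mod_cast h0
  have := Nat.le_of_dvd (by norm_num) ((ZMod.natCast_eq_zero_iff 2 p).mp this)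
  omega

lemma sq_roots (hp3 : 3 ≤ p)
    {z' x₁ x₂ x₃ : Multiplicative (ZMod 4) × Multiplicative (ZMod p)}
    (h₁ : x₁ * x₁ = z') (h₂ : x₂ * x₂ = z') (h₃ : x₃ * x₃ = z') :
    x₁ = x₂ ∨ x₁ = x₃ ∨ x₂ = x₃ := by
  have hsnd : ∀ {x y : Multiplicative (ZMod 4) × Multiplicative (ZMod p)},
      x * x = z' → y * y = z' → x.2 = y.2 := by
    intro x y hx hy
    have hx2 : x.2 * x.2 = z'.2 := congrArg Prod.snd hx
    have hy2 : y.2 * y.2 = z'.2 := congrArg Prod.snd hy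
    have ht : Multiplicative.toAdd x.2 + Multiplicative.toAdd x.2
        = Multiplicative.toAdd y.2 + Multiplicative.toAdd y.2 := by
      have := congrArg Multiplicative.toAdd (hx2.trans hy2.symm)
      simpa using this
    have h2t : (2 : ZMod p) * Multiplicative.toAdd x.2 = 2 * Multiplicative.toAdd y.2 := by
      rw [two_mul, two_mul]; exact ht
    exact Multiplicative.toAdd.injective (mul_left_cancel₀ (two_nz hp3) h2t)
  have hfst : ∀ {x : Multiplicative (ZMod 4) × Multiplicative (ZMod p)}, x * x = z' →
      Multiplicative.toAdd x.1 + Multiplicative.toAdd x.1 = Multiplicative.toAdd z'.1 := by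
    intro x hx
    have hx1 : x.1 * x.1 = z'.1 := congrArg Prod.fst hx
    have := congrArg Multiplicative.toAdd hx1
    simpa using this
  have key : ∀ (α e₁ e₂ e₃ : ZMod 4), e₁ + e₁ = α → e₂ + e₂ = α → e₃ + e₃ = α →
      (e₁ = e₂ ∨ e₁ = e₃ ∨ e₂ = e₃) := by decide
  rcases key (Multiplicative.toAdd z'.1) _ _ _ (hfst h₁) (hfst h₂) (hfst h₃) with h | h | h
  · exact Or.inl (Prod.ext (Multiplicative.toAdd.injective h) (hsnd h₁ h₂))
  · exact Or.inr (Or.inl (Prod.ext (Multiplicative.toAdd.injective h) (hsnd h₁ h₃)))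
  · exact Or.inr (Or.inr (Prod.ext (Multiplicative.toAdd.injective h) (hsnd h₂ h₃)))

end
end Aux

/-- the cyclotomic S-rings `Cyc(A(⟨σ₂⟩,K,ψ), (C₂×C₂)×C_p)` and
`Cyc(A(⟨σ₃⟩,K,ψ'), C₄×C_p)` are not algebraically isomorphic. Here `σ₂` swaps the two
generators of `C₂×C₂`, `σ₃` is inversion on `C₄`, `K ≤ Aut(C_p)` has even order with
index-2 subgroup `M` and generator `θ`, and the subdirect products are
`{(σ^i, κ) : κ ∈ K, Mκ = Mθ^i}`, acting componentwise; the basic sets are the orbits. -/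
theorem stmt13 (p : ℕ) [Fact p.Prime] (hp3 : 3 ≤ p)
    (σ₂ : MulAut (Multiplicative (ZMod 2 × ZMod 2)))
    (hσ₂a : σ₂ (Multiplicative.ofAdd ((1, 0) : ZMod 2 × ZMod 2)) =
      Multiplicative.ofAdd ((0, 1) : ZMod 2 × ZMod 2))
    (hσ₂b : σ₂ (Multiplicative.ofAdd ((0, 1) : ZMod 2 × ZMod 2)) =
      Multiplicative.ofAdd ((1, 0) : ZMod 2 × ZMod 2))
    (σ₃ : MulAut (Multiplicative (ZMod 4)))
    (hσ₃ : ∀ x : Multiplicative (ZMod 4), σ₃ x = x⁻¹)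
    (K M : Subgroup (MulAut (Multiplicative (ZMod p))))
    (hMK : M ≤ K) (hind : M.relIndex K = 2) (heven : 2 ∣ Nat.card K)
    (θ : MulAut (Multiplicative (ZMod p))) (hθK : θ ∈ K)
    (hθgen : ∀ κ ∈ K, ∃ i : ℤ, κ = θ ^ i)
    (A : SchurRing (Multiplicative (ZMod 2 × ZMod 2) × Multiplicative (ZMod p)))
    (hA : ∀ X, X ∈ A.parts ↔
      ∃ g : Multiplicative (ZMod 2 × ZMod 2) × Multiplicative (ZMod p),
        X = (Set.toFinite
          {w : Multiplicative (ZMod 2 × ZMod 2) × Multiplicative (ZMod p) |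
            ∃ sk : MulAut (Multiplicative (ZMod 2 × ZMod 2)) ×
                MulAut (Multiplicative (ZMod p)),
              (∃ i : ℤ, sk.1 = σ₂ ^ i ∧ sk.2 ∈ K ∧ sk.2 * (θ ^ i)⁻¹ ∈ M) ∧
              w = (sk.1 g.1, sk.2 g.2)}).toFinset)
    (A' : SchurRing (Multiplicative (ZMod 4) × Multiplicative (ZMod p)))
    (hA' : ∀ X, X ∈ A'.parts ↔
      ∃ g : Multiplicative (ZMod 4) × Multiplicative (ZMod p),
        X = (Set.toFinite
          {w : Multiplicative (ZMod 4) × Multiplicative (ZMod p) |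
            ∃ sk : MulAut (Multiplicative (ZMod 4)) × MulAut (Multiplicative (ZMod p)),
              (∃ i : ℤ, sk.1 = σ₃ ^ i ∧ sk.2 ∈ K ∧ sk.2 * (θ ^ i)⁻¹ ∈ M) ∧
              w = (sk.1 g.1, sk.2 g.2)}).toFinset) :
    ¬ ∃ φ, IsAlgIso A A' φ := by
  rintro ⟨φ, hbij, hconst⟩
  have hab : σ₂ (Multiplicative.ofAdd ((1, 1) : ZMod 2 × ZMod 2))
      = Multiplicative.ofAdd ((1, 1) : ZMod 2 × ZMod 2) := by
    have hsplit : Multiplicative.ofAdd ((1, 1) : ZMod 2 × ZMod 2)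
        = Multiplicative.ofAdd ((1, 0) : ZMod 2 × ZMod 2)
          * Multiplicative.ofAdd ((0, 1) : ZMod 2 × ZMod 2) := by decide
    rw [hsplit, map_mul, hσ₂a, hσ₂b]
    decide
  have haa : σ₂ (σ₂ (Multiplicative.ofAdd ((1, 0) : ZMod 2 × ZMod 2)))
      = Multiplicative.ofAdd ((1, 0) : ZMod 2 × ZMod 2) := by rw [hσ₂a, hσ₂b]
  have hsqM : θ * θ ∈ M := theta_sq_mem hind hθK
  have hθM : θ ∉ M := fun h => theta_not_mem hind hθgen h
  set X₁ := orbA p σ₂ K M θ (1, Multiplicative.ofAdd (1 : ZMod p)) with hX₁def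
  set X₂ := orbA p σ₂ K M θ (Multiplicative.ofAdd ((1, 1) : ZMod 2 × ZMod 2),
    Multiplicative.ofAdd (1 : ZMod p)) with hX₂def
  set X₃ := orbA p σ₂ K M θ (Multiplicative.ofAdd ((1, 0) : ZMod 2 × ZMod 2),
    Multiplicative.ofAdd (1 : ZMod p)) with hX₃def
  have hX₁ : X₁ ∈ A.parts := (hA X₁).mpr ⟨(1, Multiplicative.ofAdd (1 : ZMod p)), rfl⟩
  have hX₂ : X₂ ∈ A.parts := (hA X₂).mpr
    ⟨(Multiplicative.ofAdd ((1, 1) : ZMod 2 × ZMod 2), Multiplicative.ofAdd (1 : ZMod p)), rfl⟩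
  have hX₃ : X₃ ∈ A.parts := (hA X₃).mpr
    ⟨(Multiplicative.ofAdd ((1, 0) : ZMod 2 × ZMod 2), Multiplicative.ofAdd (1 : ZMod p)), rfl⟩
  obtain ⟨Z, hZ, hζZ⟩ := A.cover
    ((1 : Multiplicative (ZMod 2 × ZMod 2)), Multiplicative.ofAdd (2 : ZMod p))
  have hodd₁ : Odd ((grpInd X₁ * grpInd X₁).coeff
      ((1 : Multiplicative (ZMod 2 × ZMod 2)), Multiplicative.ofAdd (2 : ZMod p))) := by
    rw [grpInd_mul_apply, Int.odd_coe_nat, odd_card_pairs, hX₁def, filter_X1 hp3]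
    simp
  have hodd₂ : Odd ((grpInd X₂ * grpInd X₂).coeff
      ((1 : Multiplicative (ZMod 2 × ZMod 2)), Multiplicative.ofAdd (2 : ZMod p))) := by
    rw [grpInd_mul_apply, Int.odd_coe_nat, odd_card_pairs, hX₂def, filter_X2 hp3 hab]
    simp
  have hodd₃ : Odd ((grpInd X₃ * grpInd X₃).coeff
      ((1 : Multiplicative (ZMod 2 × ZMod 2)), Multiplicative.ofAdd (2 : ZMod p))) := by
    rw [grpInd_mul_apply, Int.odd_coe_nat, odd_card_pairs, hX₃def, filter_X3 hp3 haa hsqM hθM]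
    simp
  have hm1 : ((1 : Multiplicative (ZMod 2 × ZMod 2)), Multiplicative.ofAdd (1 : ZMod p)) ∈ X₁ :=
    self_mem_orbA
  have hm2 : (Multiplicative.ofAdd ((1, 1) : ZMod 2 × ZMod 2),
      Multiplicative.ofAdd (1 : ZMod p)) ∈ X₂ := self_mem_orbA
  have hne12 : X₁ ≠ X₂ := by
    intro h
    exact (by decide : ¬((1 : Multiplicative (ZMod 2 × ZMod 2))
      = Multiplicative.ofAdd ((1, 1) : ZMod 2 × ZMod 2))) (fst_X2 hab (h ▸ hm1))
  have hne13 : X₁ ≠ X₃ := by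
    intro h
    rcases fst_X3 haa hσ₂a (h ▸ hm1) with h' | h'
    · exact (by decide : ¬((1 : Multiplicative (ZMod 2 × ZMod 2))
        = Multiplicative.ofAdd ((1, 0) : ZMod 2 × ZMod 2))) h'
    · exact (by decide : ¬((1 : Multiplicative (ZMod 2 × ZMod 2))
        = Multiplicative.ofAdd ((0, 1) : ZMod 2 × ZMod 2))) h'
  have hne23 : X₂ ≠ X₃ := by
    intro h
    rcases fst_X3 haa hσ₂a (h ▸ hm2) with h' | h'
    · exact (by decide : ¬(Multiplicative.ofAdd ((1, 1) : ZMod 2 × ZMod 2)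
        = Multiplicative.ofAdd ((1, 0) : ZMod 2 × ZMod 2))) h'
    · exact (by decide : ¬(Multiplicative.ofAdd ((1, 1) : ZMod 2 × ZMod 2)
        = Multiplicative.ofAdd ((0, 1) : ZMod 2 × ZMod 2))) h'
  have hφZ : φ Z ∈ A'.parts := hbij.mapsTo (Finset.mem_coe.mpr hZ)
  obtain ⟨z', hz'⟩ := A'.nonempty_mem (φ Z) hφZ
  have hφX₁ : φ X₁ ∈ A'.parts := hbij.mapsTo (Finset.mem_coe.mpr hX₁)
  have hφX₂ : φ X₂ ∈ A'.parts := hbij.mapsTo (Finset.mem_coe.mpr hX₂)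
  have hφX₃ : φ X₃ ∈ A'.parts := hbij.mapsTo (Finset.mem_coe.mpr hX₃)
  have htrans : ∀ X ∈ A.parts, Odd ((grpInd X * grpInd X).coeff
      ((1 : Multiplicative (ZMod 2 × ZMod 2)), Multiplicative.ofAdd (2 : ZMod p))) →
      ∃ x ∈ φ X, x * x = z' := by
    intro X hX hodd
    rw [hconst X hX X hX Z hZ _ hζZ z' hz'] at hodd
    rw [grpInd_mul_apply, Int.odd_coe_nat, odd_card_pairs] at hodd
    have hne : ((φ X).filter fun x => x * x = z').Nonempty := by
      rw [← Finset.card_pos]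
      rcases hodd with ⟨k, hk⟩
      omega
    obtain ⟨x, hx⟩ := hne
    rw [Finset.mem_filter] at hx
    exact ⟨x, hx.1, hx.2⟩
  obtain ⟨x₁, hx₁m, hx₁s⟩ := htrans X₁ hX₁ hodd₁
  obtain ⟨x₂, hx₂m, hx₂s⟩ := htrans X₂ hX₂ hodd₂
  obtain ⟨x₃, hx₃m, hx₃s⟩ := htrans X₃ hX₃ hodd₃
  have hφne12 : φ X₁ ≠ φ X₂ := fun h =>
    hne12 (hbij.injOn (Finset.mem_coe.mpr hX₁) (Finset.mem_coe.mpr hX₂) h)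
  have hφne13 : φ X₁ ≠ φ X₃ := fun h =>
    hne13 (hbij.injOn (Finset.mem_coe.mpr hX₁) (Finset.mem_coe.mpr hX₃) h)
  have hφne23 : φ X₂ ≠ φ X₃ := fun h =>
    hne23 (hbij.injOn (Finset.mem_coe.mpr hX₂) (Finset.mem_coe.mpr hX₃) h)
  have hxne12 : x₁ ≠ x₂ := fun h =>
    (Finset.disjoint_left.mp (A'.pairwise_disjoint _ hφX₁ _ hφX₂ hφne12) hx₁m) (h ▸ hx₂m)
  have hxne13 : x₁ ≠ x₃ := fun h =>
    (Finset.disjoint_left.mp (A'.pairwise_disjoint _ hφX₁ _ hφX₃ hφne13) hx₁m) (h ▸ hx₃m)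
  have hxne23 : x₂ ≠ x₃ := fun h =>
    (Finset.disjoint_left.mp (A'.pairwise_disjoint _ hφX₂ _ hφX₃ hφne23) hx₂m) (h ▸ hx₃m)
  rcases sq_roots hp3 hx₁s hx₂s hx₃s with h | h | h
  exacts [hxne12 h, hxne13 h, hxne23 h]
end
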